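/- For every irreducible fraction p/q with p even, p ≥ 0, q > 0, there exists a non-negative integer m such that the m-th iterate of the mother map applied to p/q equals 0, i.e., M^m(p/q) = 0/1. Moreover m ≤ p + q. -/

import Mathlib

/-- Evaluate the continued fraction `[a_0, …, a_{n-1}, x]` projectively:
the pair `(u, w)` represents the fraction `u/w` (with `(±1, 0)` representing
`∞`), and `[a, rest] = a + 1/rest` corresponds to `(u,w) ↦ (a*u + w, u)`. -/
def cfFold (l : List ℤ) (x : ℤ × ℤ) : ℤ × ℤ :=
  l.foldr (fun a y => (a * y.1 + y.2, y.1)) x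

/-- The coprime pair `(numerator, denominator)` of the continued fraction
`[a_0, …, a_n]`; the empty continued fraction is `∞ = (1, 0)`. -/
def cfPair (l : List ℤ) : ℤ × ℤ :=
  cfFold l (1, 0)

/-- The rational number represented by a pair. -/
def pairQ (x : ℤ × ℤ) : ℚ :=
  (x.1 : ℚ) / (x.2 : ℚ)

/-- The value of the continued fraction `[a_0, …, a_n]` as a rational number. -/
def cfVal (l : List ℤ) : ℚ :=
  pairQ (cfPair l)

/-- `l = [a_0, …, a_n]` is a standard continued fraction expansion:
`a_0 ≥ 0`, `a_i ≥ 1` for `1 ≤ i ≤ n`, and `a_n ≥ 2`. -/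
def IsStdCF (l : List ℤ) : Prop :=
  l ≠ [] ∧ 0 ≤ l.head! ∧ (∀ b ∈ l.tail, 1 ≤ b) ∧ 2 ≤ l.getLast!

/-- `m` is the mother of `x`: if `x = [a_0, …, a_n]` is the standard
continued fraction expansion, then `m = [a_0, …, a_{n-1}, a_n - 2]`. -/
def IsMother (x m : ℚ) : Prop :=
  ∃ (l : List ℤ) (a : ℤ), IsStdCF (l ++ [a]) ∧
    x = cfVal (l ++ [a]) ∧ m = cfVal (l ++ [a - 2])

open Classical in
/-- The mother map `M`, as a function (defaulting to `0` where undefined). -/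
noncomputable def motherFun (x : ℚ) : ℚ :=
  if h : ∃ m, IsMother x m then h.choose else 0

lemma cfFold_nil (x : ℤ × ℤ) : cfFold [] x = x := rfl

lemma cfFold_cons (a : ℤ) (l : List ℤ) (x : ℤ × ℤ) :
    cfFold (a :: l) x = (a * (cfFold l x).1 + (cfFold l x).2, (cfFold l x).1) := rfl

lemma cfFold_append (l l' : List ℤ) (x : ℤ × ℤ) :
    cfFold (l ++ l') x = cfFold l (cfFold l' x) := List.foldr_append

lemma cfFold_linear (l : List ℤ) (u w : ℤ) :
    cfFold l (u, w) = (u * (cfFold l (1,0)).1 + w * (cfFold l (0,1)).1,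
      u * (cfFold l (1,0)).2 + w * (cfFold l (0,1)).2) := by
  induction l with
  | nil => simp [cfFold_nil]
  | cons a t ih =>
    rw [cfFold_cons, cfFold_cons (l := t) (x := (1,0)), cfFold_cons (l := t) (x := (0,1)), ih]
    dsimp only
    rw [Prod.mk.injEq]
    constructor <;> ring

lemma cfFold_det (l : List ℤ) :
    (cfFold l (1,0)).1 * (cfFold l (0,1)).2 - (cfFold l (1,0)).2 * (cfFold l (0,1)).1
      = (-1) ^ l.length := by
  induction l with
  | nil => simp [cfFold_nil]
  | cons a t ih =>
    rw [cfFold_cons, cfFold_cons (l := t) (x := (0,1))]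
    dsimp only [List.length_cons]
    rw [pow_succ]
    nlinarith [ih]

lemma getLast!_singleton (a : ℤ) : ([a] : List ℤ).getLast! = a := rfl

lemma getLast!_cons_cons (a b : ℤ) (l : List ℤ) :
    (a::b::l).getLast! = (b::l).getLast! := by
  simp [List.getLast!, List.getLast]

/-- Sign invariants for folds over lists with all entries `≥ 1`. -/
lemma cfFold_pos (l : List ℤ) (h : ∀ b ∈ l, 1 ≤ b) :
    1 ≤ (cfFold l (1,0)).1 ∧ 0 ≤ (cfFold l (1,0)).2 ∧ 0 ≤ (cfFold l (0,1)).2 ∧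
      (1 ≤ (cfFold l (0,1)).1 ∨
        ((cfFold l (0,1)).1 = 0 ∧ (cfFold l (0,1)).2 = 1 ∧ l = [])) := by
  induction l with
  | nil => simp [cfFold_nil]
  | cons a t ih =>
    have ha : 1 ≤ a := h a (by simp)
    obtain ⟨h1, h2, h3, h4⟩ := ih (fun b hb => h b (by simp [hb]))
    rw [cfFold_cons, cfFold_cons (l := t) (x := (0,1))]
    dsimp only
    refine ⟨by nlinarith, by linarith, ?_, ?_⟩
    · rcases h4 with h4 | ⟨h4, _, _⟩ <;> linarith
    · left
      rcases h4 with h4 | ⟨h4, h5, _⟩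
      · nlinarith
      · rw [h4, h5]; linarith

/-- For a nonempty list with entries `≥ 1` and last entry `≥ 2`, the pair
`(u, w)` satisfies `1 ≤ w < u`. -/
lemma cfPair_strong (l : List ℤ) (h : ∀ b ∈ l, 1 ≤ b) (h2 : l ≠ [])
    (h3 : 2 ≤ l.getLast!) :
    1 ≤ (cfPair l).2 ∧ (cfPair l).2 < (cfPair l).1 := by
  induction l with
  | nil => exact absurd rfl h2
  | cons a t ih =>
    rcases t with _ | ⟨b, t'⟩
    · rw [getLast!_singleton] at h3
      have : cfPair [a] = (a * 1 + 0, 1) := rfl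
      rw [this]
      constructor
      · exact le_refl 1
      · dsimp only; linarith
    · have ha : 1 ≤ a := h a (by simp)
      rw [getLast!_cons_cons] at h3
      obtain ⟨ih1, ih2⟩ := ih (fun x hx => h x (by simp at hx ⊢; tauto)) (by simp) h3
      unfold cfPair at *
      rw [cfFold_cons]
      dsimp only
      constructor
      · linarith
      · nlinarith

lemma cfVal_singleton (a : ℤ) : cfVal [a] = a := by
  show ((a * 1 + 0 : ℤ) : ℚ) / ((1 : ℤ) : ℚ) = a
  push_cast; ring

lemma cfVal_cons (a : ℤ) (t : List ℤ) (ht : t ≠ []) (h : ∀ b ∈ t, 1 ≤ b)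
    (h3 : 2 ≤ t.getLast!) :
    cfVal (a :: t) = a + 1 / cfVal t ∧ 0 < 1 / cfVal t ∧ 1 / cfVal t < 1 := by
  obtain ⟨hw, hu⟩ := cfPair_strong t h ht h3
  have hpair : cfPair (a :: t) = (a * (cfPair t).1 + (cfPair t).2, (cfPair t).1) := rfl
  set u := (cfPair t).1 with hud
  set w := (cfPair t).2 with hwd
  have huQ : (1:ℚ) < (u:ℚ) := by exact_mod_cast lt_of_le_of_lt hw hu
  have hwQ : (1:ℚ) ≤ (w:ℚ) := by exact_mod_cast hw
  have hwuQ : (w:ℚ) < (u:ℚ) := by exact_mod_cast hu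
  have hvt : cfVal t = (u:ℚ) / (w:ℚ) := rfl
  have hone : 1 / cfVal t = (w:ℚ) / (u:ℚ) := by
    rw [hvt, one_div_div]
  refine ⟨?_, ?_, ?_⟩
  · show ((a * u + w : ℤ) : ℚ) / ((u : ℤ) : ℚ) = a + 1 / cfVal t
    rw [hone]
    push_cast
    field_simp
  · rw [hone]; positivity
  · rw [hone]
    rw [div_lt_one (by linarith)]
    exact hwuQ

lemma cfVal_cons_floor (a : ℤ) (t : List ℤ) (ht : t ≠ []) (h : ∀ b ∈ t, 1 ≤ b)
    (h3 : 2 ≤ t.getLast!) : ⌊cfVal (a :: t)⌋ = a := by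
  obtain ⟨h1, h2, h4⟩ := cfVal_cons a t ht h h3
  rw [h1, Int.floor_eq_iff]
  constructor
  · linarith
  · linarith

lemma std_components {a : ℤ} {t : List ℤ} (hl : IsStdCF (a :: t)) (ht : t ≠ []) :
    IsStdCF t ∧ (∀ b ∈ t, 1 ≤ b) ∧ 2 ≤ t.getLast! := by
  obtain ⟨-, -, htail, hlast⟩ := hl
  rcases t with - | ⟨b, t'⟩
  · exact absurd rfl ht
  · rw [getLast!_cons_cons] at hlast
    have hmem : ∀ x ∈ b :: t', 1 ≤ x := htail
    refine ⟨⟨by simp, ?_, ?_, hlast⟩, hmem, hlast⟩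
    · have : (1:ℤ) ≤ b := hmem b (by simp)
      simpa using by linarith
    · intro x hx
      exact hmem x (by simp at hx ⊢; tauto)

lemma stdCF_unique (l : List ℤ) : ∀ l', IsStdCF l → IsStdCF l' → cfVal l = cfVal l' → l = l' := by
  induction l with
  | nil => intro l' hl _ _; exact absurd rfl hl.1
  | cons a t ih =>
    intro l' hl hl' hval
    rcases l' with - | ⟨a', t'⟩
    · exact absurd rfl hl'.1
    rcases ht : t with - | ⟨b, s⟩ <;> rcases ht' : t' with - | ⟨b', s'⟩ <;> subst ht <;> subst ht'
    · -- both singletons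
      rw [cfVal_singleton, cfVal_singleton] at hval
      exact_mod_cast congrArg (fun x => ([x] : List ℤ)) (by exact_mod_cast hval : a = a')
    · -- [a] vs a' :: (b'::s')
      exfalso
      obtain ⟨-, hm', hlast'⟩ := std_components hl' (by simp)
      obtain ⟨he, hpos, -⟩ := cfVal_cons a' _ (by simp) hm' hlast'
      rw [cfVal_singleton] at hval
      have hfl : ⌊cfVal (a' :: b' :: s')⌋ = a' := cfVal_cons_floor a' _ (by simp) hm' hlast'
      have haa : a' = a := by rw [← hfl, ← hval, Int.floor_intCast]
      rw [he, haa] at hval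
      linarith
    · -- a :: (b::s) vs [a']
      exfalso
      obtain ⟨-, hm, hlast⟩ := std_components hl (by simp)
      obtain ⟨he, hpos, -⟩ := cfVal_cons a _ (by simp) hm hlast
      rw [cfVal_singleton] at hval
      have hfl : ⌊cfVal (a :: b :: s)⌋ = a := cfVal_cons_floor a _ (by simp) hm hlast
      have haa : a = a' := by rw [← hfl, hval, Int.floor_intCast]
      rw [he] at hval
      have hc : (a:ℚ) = (a':ℚ) := by exact_mod_cast haa
      linarith
    · -- both long
      obtain ⟨hstd, hm, hlast⟩ := std_components hl (by simp)
      obtain ⟨hstd', hm', hlast'⟩ := std_components hl' (by simp)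
      have hfl : ⌊cfVal (a :: b :: s)⌋ = a := cfVal_cons_floor a _ (by simp) hm hlast
      have hfl' : ⌊cfVal (a' :: b' :: s')⌋ = a' := cfVal_cons_floor a' _ (by simp) hm' hlast'
      have haa : a = a' := by rw [← hfl, ← hfl', hval]
      obtain ⟨he, hpos, -⟩ := cfVal_cons a _ (by simp) hm hlast
      obtain ⟨he', hpos', -⟩ := cfVal_cons a' _ (by simp) hm' hlast'
      have hinv : 1 / cfVal (b::s) = 1 / cfVal (b'::s') := by
        rw [he, he', haa] at hval
        linarith
      have hne : cfVal (b::s) = cfVal (b'::s') := by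
        have h01 : cfVal (b::s) ≠ 0 := by
          intro h0; rw [h0] at hpos; simp at hpos
        have h02 : cfVal (b'::s') ≠ 0 := by
          intro h0; rw [h0] at hpos'; simp at hpos'
        rw [← one_div_one_div (cfVal (b::s)), hinv, one_div_one_div]
      have := ih (b'::s') hstd hstd' hne
      rw [haa, this]

def euclidCF : ℕ → ℕ → List ℤ
  | _, 0 => []
  | p, q+1 => ((p / (q+1) : ℕ) : ℤ) :: euclidCF (q+1) (p % (q+1))
  termination_by p q => q
  decreasing_by exact Nat.mod_lt _ (Nat.succ_pos q)

lemma euclidCF_pos (p q : ℕ) (hq : 0 < q) :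
    euclidCF p q = ((p / q : ℕ) : ℤ) :: euclidCF q (p % q) := by
  obtain ⟨q', rfl⟩ := Nat.exists_eq_add_of_lt hq
  simp only [Nat.zero_add]
  rw [euclidCF]

lemma euclid_pair : ∀ q p : ℕ, 0 < q → Nat.gcd p q = 1 →
    cfPair (euclidCF p q) = ((p : ℤ), (q : ℤ)) := by
  intro q
  induction q using Nat.strong_induction_on with
  | _ q ih =>
    intro p hq hco
    rw [euclidCF_pos p q hq]
    rcases Nat.eq_zero_or_pos (p % q) with hr | hr
    · have hdvd : q ∣ p := Nat.dvd_of_mod_eq_zero hr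
      have hq1 : q = 1 := Nat.dvd_one.mp (hco ▸ Nat.dvd_gcd hdvd dvd_rfl)
      subst hq1
      simp only [Nat.mod_one]
      rw [euclidCF]
      have : cfPair [((p / 1 : ℕ) : ℤ)] = (((p/1 : ℕ) : ℤ) * 1 + 0, 1) := rfl
      rw [this, Prod.mk.injEq]
      simp [Nat.div_one]
    · have hco' : Nat.gcd q (p % q) = 1 := by
        rw [Nat.gcd_comm, ← Nat.gcd_rec, Nat.gcd_comm]
        exact hco
      have htail := ih (p % q) (Nat.mod_lt _ hq) q hr hco'
      have hcons : cfPair (((p / q : ℕ) : ℤ) :: euclidCF q (p % q))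
          = (((p / q : ℕ) : ℤ) * (cfPair (euclidCF q (p % q))).1 + (cfPair (euclidCF q (p % q))).2,
             (cfPair (euclidCF q (p % q))).1) := rfl
      rw [hcons, htail, Prod.mk.injEq]
      constructor
      · dsimp only
        exact_mod_cast Nat.div_add_mod' p q
      · rfl

lemma euclid_entries : ∀ b a : ℕ, b < a → ∀ x ∈ euclidCF a b, 1 ≤ x := by
  intro b
  induction b using Nat.strong_induction_on with
  | _ b ih =>
    intro a hba x hx
    rcases Nat.eq_zero_or_pos b with rfl | hb
    · rw [euclidCF] at hx; simp at hx
    · rw [euclidCF_pos a b hb] at hx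
      rcases List.mem_cons.mp hx with rfl | hx'
      · have : 1 ≤ a / b := (Nat.one_le_div_iff hb).mpr (le_of_lt hba)
        exact_mod_cast this
      · exact ih (a % b) (Nat.mod_lt _ hb) b (Nat.mod_lt _ hb) x hx'

lemma euclid_last : ∀ q p : ℕ, 2 ≤ q → Nat.gcd p q = 1 →
    2 ≤ (euclidCF p q).getLast! := by
  intro q
  induction q using Nat.strong_induction_on with
  | _ q ih =>
    intro p hq hco
    have hq0 : 0 < q := by omega
    rw [euclidCF_pos p q hq0]
    rcases Nat.lt_or_ge (p % q) 2 with hr | hr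
    · interval_cases h : (p % q)
      · exfalso
        have hdvd : q ∣ p := Nat.dvd_of_mod_eq_zero h
        have : q = 1 := Nat.dvd_one.mp (hco ▸ Nat.dvd_gcd hdvd dvd_rfl)
        omega
      · rw [euclidCF_pos q 1 (by norm_num), Nat.mod_one, euclidCF, getLast!_cons_cons,
          Nat.div_one, getLast!_singleton]
        exact_mod_cast hq
    · have hco' : Nat.gcd q (p % q) = 1 := by
        rw [Nat.gcd_comm, ← Nat.gcd_rec, Nat.gcd_comm]; exact hco
      have h2 := ih (p % q) (Nat.mod_lt _ hq0) q hr hco'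
      rw [euclidCF_pos q (p % q) (by omega)] at h2 ⊢
      rw [getLast!_cons_cons]
      exact h2

lemma euclid_std (p q : ℕ) (hq : 0 < q) (hco : Nat.gcd p q = 1)
    (hp : q = 1 → 2 ≤ p) : IsStdCF (euclidCF p q) := by
  rw [euclidCF_pos p q hq]
  refine ⟨by simp, by simp only [List.head!_cons]; exact Int.natCast_nonneg _, ?_, ?_⟩
  · exact fun b hb => euclid_entries (p % q) q (Nat.mod_lt _ hq) b hb
  · rcases Nat.lt_or_ge q 2 with h2 | h2
    · have hq1 : q = 1 := by omega
      subst hq1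
      rw [Nat.mod_one, euclidCF, Nat.div_one, getLast!_singleton]
      exact_mod_cast hp rfl
    · rw [← euclidCF_pos p q hq]
      exact euclid_last q p h2 hco

lemma concat_inj {l l' : List ℤ} {a a' : ℤ} (h : l ++ [a] = l' ++ [a']) :
    l = l' ∧ a = a' := by
  have := congrArg List.reverse h
  simp only [List.reverse_append, List.reverse_cons, List.reverse_nil, List.nil_append,
    List.singleton_append, List.cons.injEq] at this
  exact ⟨by simpa using congrArg List.reverse this.2, this.1⟩

lemma cfPair_concat (l : List ℤ) (a : ℤ) :
    cfPair (l ++ [a]) = (a * (cfFold l (1,0)).1 + (cfFold l (0,1)).1,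
      a * (cfFold l (1,0)).2 + (cfFold l (0,1)).2) := by
  unfold cfPair
  rw [cfFold_append]
  have h1 : cfFold [a] (1,0) = (a, 1) := by
    show (a * 1 + 0, 1) = (a, 1)
    rw [Prod.mk.injEq]
    exact ⟨by ring, rfl⟩
  rw [h1, cfFold_linear]
  rw [Prod.mk.injEq]
  constructor <;> ring

lemma getLast!_concat (l : List ℤ) (a : ℤ) : (l ++ [a]).getLast! = a := by
  induction l with
  | nil => rfl
  | cons b t ih =>
    rcases t with - | ⟨c, t'⟩
    · show (b :: [a]).getLast! = a
      rw [getLast!_cons_cons, getLast!_singleton]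
    · show (b :: c :: (t' ++ [a])).getLast! = a
      rw [getLast!_cons_cons]
      exact ih

lemma signs (l : List ℤ) (a p : ℤ) (ha : 2 ≤ a)
    (hhead : 0 ≤ (l ++ [a]).head!) (htail : ∀ b ∈ (l ++ [a]).tail, 1 ≤ b)
    (hpeq : a * (cfFold l (1,0)).1 + (cfFold l (0,1)).1 = p) (hev : 2 ∣ p) :
    0 ≤ (cfFold l (1,0)).1 ∧ 0 ≤ (cfFold l (0,1)).1 ∧
      1 ≤ (cfFold l (1,0)).1 + (cfFold l (1,0)).2 ∧
      1 ≤ (a - 2) * (cfFold l (1,0)).2 + (cfFold l (0,1)).2 := by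
  rcases l with - | ⟨a0, t⟩
  · refine ⟨zero_le_one, le_refl 0, ?_, ?_⟩
    · show (1:ℤ) ≤ 1 + 0
      norm_num
    · show 1 ≤ (a - 2) * (0:ℤ) + 1
      norm_num
  · have ha0 : 0 ≤ a0 := by simpa using hhead
    have ht : ∀ b ∈ t, 1 ≤ b := by
      intro b hb
      exact htail b (by simp [hb])
    obtain ⟨hPt, hQt, hSt, hRt⟩ := cfFold_pos t ht
    rw [cfFold_cons, cfFold_cons (x := (0,1))] at *
    dsimp only at *
    rcases hRt with hRt | ⟨hRt0, hSt1, rfl⟩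
    · refine ⟨by nlinarith, by nlinarith, by nlinarith, by nlinarith⟩
    · simp only [cfFold_nil] at *
      have hp2 : a * a0 + 1 = p := by linarith [hpeq]
      have ha3 : 3 ≤ a := by
        rcases Int.even_or_odd a with he | ho
        · exfalso
          have hevp : Even p := even_iff_two_dvd.mpr hev
          have : Odd p := by rw [← hp2]; exact (he.mul_right a0).add_one
          exact (Int.not_odd_iff_even.mpr hevp) this
        · obtain ⟨k, hk⟩ := ho
          omega
      refine ⟨by nlinarith, by nlinarith, by nlinarith, by nlinarith⟩

lemma mother_key (p q : ℤ) (hp : 0 < p) (hq : 0 < q) (hco : Int.gcd p q = 1)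
    (hev : 2 ∣ p) :
    ∃ p' q' : ℤ, 0 ≤ p' ∧ 0 < q' ∧ Int.gcd p' q' = 1 ∧ 2 ∣ p' ∧
      p' + q' + 2 ≤ p + q ∧ motherFun ((p:ℚ)/q) = (p':ℚ)/q' := by
  -- set up the standard continued fraction of p/q
  have hnp : ((p.natAbs : ℤ)) = p := Int.natAbs_of_nonneg hp.le
  have hdq : ((q.natAbs : ℤ)) = q := Int.natAbs_of_nonneg hq.le
  have hd0 : 0 < q.natAbs := Int.natAbs_pos.mpr hq.ne'
  have hgcd : Nat.gcd p.natAbs q.natAbs = 1 := hco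
  have hp2 : q.natAbs = 1 → 2 ≤ p.natAbs := by
    intro h1
    obtain ⟨c, hc⟩ := hev
    omega
  have hLstd := euclid_std p.natAbs q.natAbs hd0 hgcd hp2
  have hLpair : cfPair (euclidCF p.natAbs q.natAbs) = (p, q) := by
    rw [euclid_pair q.natAbs p.natAbs hd0 hgcd, hnp, hdq]
  set L := euclidCF p.natAbs q.natAbs with hLdef
  have hLne : L ≠ [] := hLstd.1
  have hL : L.dropLast ++ [L.getLast hLne] = L := List.dropLast_append_getLast hLne
  set l := L.dropLast with hldef
  set a := L.getLast hLne with hadef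
  have hstd : IsStdCF (l ++ [a]) := by rw [hL]; exact hLstd
  -- the pair identities
  have hpair : cfPair (l ++ [a]) = (p, q) := by rw [hL]; exact hLpair
  rw [cfPair_concat] at hpair
  have hpeq : a * (cfFold l (1,0)).1 + (cfFold l (0,1)).1 = p :=
    congrArg Prod.fst hpair
  have hqeq : a * (cfFold l (1,0)).2 + (cfFold l (0,1)).2 = q :=
    congrArg Prod.snd hpair
  -- last entry is ≥ 2
  have ha2 : 2 ≤ a := by
    have h3 := hstd.2.2.2
    rwa [getLast!_concat] at h3
  -- sign facts
  obtain ⟨hP, hR, hPQ, hq'⟩ := signs l a p ha2 hstd.2.1 hstd.2.2.1 hpeq hev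
  -- determinant
  have hdet := cfFold_det l
  set P := (cfFold l (1,0)).1 with hPdef
  set Q := (cfFold l (1,0)).2 with hQdef
  set R := (cfFold l (0,1)).1 with hRdef
  set S := (cfFold l (0,1)).2 with hSdef
  set e := ((-1 : ℤ)) ^ l.length with hedef
  have he : e * e = 1 := by
    rw [hedef, ← pow_add, ← two_mul, pow_mul]
    norm_num
  refine ⟨p - 2 * P, q - 2 * Q, ?_, ?_, ?_, ?_, ?_, ?_⟩
  · nlinarith
  · have : q - 2 * Q = (a - 2) * Q + S := by linarith
    rw [this]; linarith
  · refine Int.isCoprime_iff_gcd_eq_one.mp ⟨-e * Q, e * P, ?_⟩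
    have hrel : (p - 2 * P) * Q - (q - 2 * Q) * P = -e := by
      have h1 : p = a * P + R := hpeq.symm
      have h2 : q = a * Q + S := hqeq.symm
      rw [h1, h2]
      linear_combination -hdet
    linear_combination (-e) * hrel + he
  · obtain ⟨c, hc⟩ := hev
    exact ⟨c - P, by omega⟩
  · linarith
  · -- value of the mother map
    have hm0pair : cfPair (l ++ [a - 2]) = (p - 2 * P, q - 2 * Q) := by
      rw [cfPair_concat, ← hPdef, ← hQdef, ← hRdef, ← hSdef, Prod.mk.injEq]
      constructor <;> linarith
    have hxval : ((p:ℚ)/q) = cfVal (l ++ [a]) := by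
      unfold cfVal
      rw [cfPair_concat, hpair]
      rfl
    have hmval : cfVal (l ++ [a - 2]) = ((p - 2*P : ℤ) : ℚ) / ((q - 2*Q : ℤ) : ℚ) := by
      unfold cfVal
      rw [hm0pair]
      rfl
    have hex : ∃ m, IsMother ((p:ℚ)/q) m :=
      ⟨cfVal (l ++ [a - 2]), l, a, hstd, hxval, rfl⟩
    have huniq : ∀ m, IsMother ((p:ℚ)/q) m → m = cfVal (l ++ [a - 2]) := by
      rintro m ⟨l₂, a₂, hstd₂, hx₂, hm₂⟩
      have heq : l₂ ++ [a₂] = l ++ [a] :=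
        stdCF_unique _ _ hstd₂ hstd (by rw [← hx₂, ← hxval])
      obtain ⟨rfl, rfl⟩ := concat_inj heq
      exact hm₂
    have hmf : motherFun ((p:ℚ)/q) = cfVal (l ++ [a - 2]) := by
      rw [motherFun, dif_pos hex]
      exact huniq _ hex.choose_spec
    rw [hmf, hmval]


lemma main_aux : ∀ n : ℕ, ∀ p q : ℤ, 0 ≤ p → 0 < q → Int.gcd p q = 1 → 2 ∣ p →
    p + q ≤ (n : ℤ) → ∃ m : ℕ, (m : ℤ) ≤ p + q ∧ motherFun^[m] ((p : ℚ) / q) = 0 := by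
  intro n
  induction n with
  | zero => intro p q hp hq _ _ hle; exfalso; omega
  | succ n ih =>
    intro p q hp hq hco hev hle
    rcases eq_or_lt_of_le hp with rfl | hp0
    · have hq1 : q = 1 := by
        have : Int.gcd 0 q = q.natAbs := by simp [Int.gcd]
        omega
      subst hq1
      exact ⟨0, by norm_num, by norm_num⟩
    · obtain ⟨p', q', h1, h2, h3, h4, h5, h6⟩ := mother_key p q hp0 hq hco hev
      obtain ⟨m, hm1, hm2⟩ := ih p' q' h1 h2 h3 h4 (by omega)
      refine ⟨m + 1, by push_cast; omega, ?_⟩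
      rw [Function.iterate_succ_apply, h6]
      exact hm2

/-- For every irreducible fraction `p/q` with `p` even, `p ≥ 0`, `q > 0`,
some iterate of the mother map sends `p/q` to `0 = 0/1`, after at most
`p + q` steps. -/
theorem mother_iterate_reaches_zero (p q : ℤ) (hp : 0 ≤ p) (hq : 0 < q)
    (hco : Int.gcd p q = 1) (hev : 2 ∣ p) :
    ∃ m : ℕ, (m : ℤ) ≤ p + q ∧ motherFun^[m] ((p : ℚ) / q) = 0 :=
  main_aux (p + q).toNat p q hp hq hco hev (Int.self_le_toNat _)
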